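/- Explicit value of V in the unconstrained regime: with a_i, s_i, μ and V as defined, let (x,t) satisfy A_{i−1} ≤ t < A_i and x + ((s_i−1)/s_i)(A_i − t) + ∑_{j=i+1}^σ a_j (s_j−1)/s_j ≤ μ/2. Then V(x,t) = (A_i − t) log s_i + ∑_{j=i+1}^σ a_j log s_j. -/

import Mathlib

open Finset

/-- The entropy function `H(θ) = -θ log θ - (1-θ) log(1-θ)`, with
`H 0 = H 1 = 0` by Mathlib's convention `Real.log 0 = 0`. -/
noncomputable def Hent (θ : ℝ) : ℝ := -θ * Real.log θ - (1 - θ) * Real.log (1 - θ)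

/-- `A_{i-1} = a_1 + ⋯ + a_{i-1}`, the left endpoint of block `i`. -/
noncomputable def Apre {σ : ℕ} (a : Fin σ → ℝ) (i : Fin σ) : ℝ :=
  ∑ k ∈ Finset.univ.filter (fun k => k < i), a k

lemma key_le (s : ℝ) (hs : 2 ≤ s) {θ : ℝ} (h0 : 0 ≤ θ) (h1 : θ ≤ 1) :
    θ * Real.log (s - 1) + Hent θ ≤ Real.log s := by
  have hs0 : (0:ℝ) < s := by linarith
  rcases eq_or_lt_of_le h0 with h|h0
  · simp [Hent, ← h]
    exact Real.log_nonneg (by linarith)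
  rcases eq_or_lt_of_le h1 with h|h1
  · simp [Hent, h]
    exact Real.log_le_log (by linarith) (by linarith)
  have hθ : θ ≠ 0 := ne_of_gt h0
  have h1θ : (0:ℝ) < 1 - θ := by linarith
  have i1 := Real.log_le_sub_one_of_pos (show (0:ℝ) < (s-1)/(θ*s) from div_pos (by linarith) (by positivity))
  have i2 := Real.log_le_sub_one_of_pos (show (0:ℝ) < 1/((1-θ)*s) by positivity)
  have e1 : Real.log ((s-1)/(θ*s)) = Real.log (s-1) - Real.log θ - Real.log s := by
    rw [Real.log_div (by linarith) (by positivity), Real.log_mul hθ hs0.ne']; ring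
  have e2 : Real.log (1/((1-θ)*s)) = - Real.log (1-θ) - Real.log s := by
    rw [Real.log_div one_ne_zero (by positivity), Real.log_mul h1θ.ne' hs0.ne', Real.log_one]; ring
  have j1 : θ * Real.log (s-1) - θ * Real.log θ - θ * Real.log s ≤ (s-1)/s - θ := by
    have := mul_le_mul_of_nonneg_left i1 h0.le
    rw [e1] at this
    have e3 : θ * ((s-1)/(θ*s) - 1) = (s-1)/s - θ := by field_simp
    nlinarith [this]
  have j2 : -(1-θ) * Real.log (1-θ) - (1-θ) * Real.log s ≤ 1/s - (1-θ) := by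
    have := mul_le_mul_of_nonneg_left i2 h1θ.le
    rw [e2] at this
    have e4 : (1-θ) * (1/((1-θ)*s) - 1) = 1/s - (1-θ) := by field_simp
    nlinarith [this]
  have e5 : (s-1)/s + 1/s = 1 := by field_simp; ring
  have : θ * Real.log s + (1-θ) * Real.log s = Real.log s := by ring
  unfold Hent
  nlinarith [j1, j2]

lemma key_eq (s : ℝ) (hs : 2 ≤ s) :
    ((s-1)/s) * Real.log (s - 1) + Hent ((s-1)/s) = Real.log s := by
  have hs0 : (0:ℝ) < s := by linarith
  have h1 : (1 : ℝ) - (s-1)/s = 1/s := by field_simp; ring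
  unfold Hent
  rw [h1, Real.log_div (by linarith) hs0.ne', Real.log_div one_ne_zero hs0.ne', Real.log_one]
  field_simp
  ring

/-- explicit value of the limit value function `V` in the
unconstrained regime: if the unconstrained maximizers `θ_j* = (s_j-1)/s_j`
satisfy the constraint, then
`V(x,t) = (A_i - t) log s_i + ∑_{j>i} a_j log s_j`. -/
theorem limit_value_function_unconstrained
    (σ : ℕ) (hσ : 1 ≤ σ) (s : Fin σ → ℕ) (hs : ∀ i, 2 ≤ s i)
    (a : Fin σ → ℝ) (ha : ∀ i, 0 < a i) (hsum : ∑ i, a i = 1)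
    (μ : ℝ) (hμ : μ ∈ Set.Ioo (0 : ℝ) 1)
    (V : ℝ → ℝ → ℝ)
    (hV : ∀ (i : Fin σ) (x t : ℝ), x ∈ Set.Icc 0 (μ / 2) →
      Apre a i ≤ t → t < Apre a i + a i →
      V x t = sSup {v : ℝ | ∃ θ : Fin σ → ℝ,
        (∀ j, θ j ∈ Set.Icc (0 : ℝ) 1) ∧
        x + θ i * (Apre a i + a i - t)
          + (∑ j ∈ univ.filter (fun j => i < j), a j * θ j) ≤ μ / 2 ∧
        v = (Apre a i + a i - t) *
              (θ i * Real.log ((s i : ℝ) - 1) + Hent (θ i)) +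
            ∑ j ∈ univ.filter (fun j => i < j),
              a j * (θ j * Real.log ((s j : ℝ) - 1) + Hent (θ j))})
    (i : Fin σ) (x t : ℝ)
    (hx : 0 ≤ x)
    (hti : Apre a i ≤ t ∧ t < Apre a i + a i)
    (hcon : x + (((s i : ℝ) - 1) / (s i : ℝ)) * (Apre a i + a i - t)
        + (∑ j ∈ univ.filter (fun j => i < j),
            a j * (((s j : ℝ) - 1) / (s j : ℝ))) ≤ μ / 2) :
    V x t = (Apre a i + a i - t) * Real.log (s i : ℝ) +
      ∑ j ∈ univ.filter (fun j => i < j), a j * Real.log (s j : ℝ) := by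
  obtain ⟨ht1, ht2⟩ := hti
  have hP : 0 ≤ Apre a i + a i - t := by linarith
  have hcast : ∀ j : Fin σ, (2:ℝ) ≤ (s j : ℝ) := fun j => by exact_mod_cast hs j
  have hfrac : ∀ j : Fin σ, ((s j:ℝ)-1)/(s j : ℝ) ∈ Set.Icc (0:ℝ) 1 := fun j => by
    have := hcast j
    exact ⟨div_nonneg (by linarith) (by linarith), by rw [div_le_one (by linarith)]; linarith⟩
  have hxle : x ≤ μ/2 := by
    have h1 : 0 ≤ (((s i:ℝ)-1)/(s i : ℝ)) * (Apre a i + a i - t) := mul_nonneg (hfrac i).1 hP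
    have h2 : 0 ≤ ∑ j ∈ univ.filter (fun j => i < j), a j * (((s j:ℝ)-1)/(s j : ℝ)) :=
      Finset.sum_nonneg fun j _ => mul_nonneg (ha j).le (hfrac j).1
    linarith
  rw [hV i x t ⟨hx, hxle⟩ ht1 ht2]
  have hkeq : ∀ j : Fin σ, (((s j:ℝ)-1)/(s j : ℝ)) * Real.log ((s j:ℝ) - 1)
      + Hent (((s j:ℝ)-1)/(s j : ℝ)) = Real.log (s j : ℝ) := fun j => key_eq _ (hcast j)
  have hmem : ((Apre a i + a i - t) * Real.log (s i : ℝ) +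
      ∑ j ∈ univ.filter (fun j => i < j), a j * Real.log (s j : ℝ)) ∈
      {v : ℝ | ∃ θ : Fin σ → ℝ,
        (∀ j, θ j ∈ Set.Icc (0 : ℝ) 1) ∧
        x + θ i * (Apre a i + a i - t)
          + (∑ j ∈ univ.filter (fun j => i < j), a j * θ j) ≤ μ / 2 ∧
        v = (Apre a i + a i - t) *
              (θ i * Real.log ((s i : ℝ) - 1) + Hent (θ i)) +
            ∑ j ∈ univ.filter (fun j => i < j),
              a j * (θ j * Real.log ((s j : ℝ) - 1) + Hent (θ j))} := by
    refine ⟨fun j => ((s j:ℝ)-1)/(s j : ℝ), fun j => hfrac j, hcon, ?_⟩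
    simp only [hkeq]
  have hub : ∀ v ∈ {v : ℝ | ∃ θ : Fin σ → ℝ,
        (∀ j, θ j ∈ Set.Icc (0 : ℝ) 1) ∧
        x + θ i * (Apre a i + a i - t)
          + (∑ j ∈ univ.filter (fun j => i < j), a j * θ j) ≤ μ / 2 ∧
        v = (Apre a i + a i - t) *
              (θ i * Real.log ((s i : ℝ) - 1) + Hent (θ i)) +
            ∑ j ∈ univ.filter (fun j => i < j),
              a j * (θ j * Real.log ((s j : ℝ) - 1) + Hent (θ j))},
      v ≤ (Apre a i + a i - t) * Real.log (s i : ℝ) +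
      ∑ j ∈ univ.filter (fun j => i < j), a j * Real.log (s j : ℝ) := by
    rintro v ⟨θ, hθ, -, rfl⟩
    refine add_le_add
      (mul_le_mul_of_nonneg_left (key_le _ (hcast i) (hθ i).1 (hθ i).2) hP)
      (Finset.sum_le_sum fun j _ =>
        mul_le_mul_of_nonneg_left (key_le _ (hcast j) (hθ j).1 (hθ j).2) (ha j).le)
  exact le_antisymm (csSup_le ⟨_, hmem⟩ hub) (le_csSup ⟨_, hub⟩ hmem)
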